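/- Let R be an associative ring satisfying R = [R,R], i.e. R equals the additive subgroup generated by all commutators [r₁,r₂] = r₁r₂ − r₂r₁. If I is a Lie nilpotent one-sided (left or right) ideal of R, then there exists a nilpotent two-sided ideal J of R with I ⊆ J. -/

import Mathlib

/-- `I` is a right ideal of `R` (as an additive subgroup closed under right multiplication). -/
def IsRightIdealSG {R : Type*} [Ring R] (I : AddSubgroup R) : Prop :=
  ∀ i ∈ I, ∀ r : R, i * r ∈ I

/-- `I` is a left ideal of `R`. -/
def IsLeftIdealSG {R : Type*} [Ring R] (I : AddSubgroup R) : Prop :=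
  ∀ i ∈ I, ∀ r : R, r * i ∈ I

/-- `I` is a two-sided ideal of `R`. -/
def IsIdealSG {R : Type*} [Ring R] (I : AddSubgroup R) : Prop :=
  IsLeftIdealSG I ∧ IsRightIdealSG I

/-- Left-normed iterated commutator: `itComm s n = [[...[s 0, s 1],...], s n]`
(a left-normed commutator of `n + 1` elements). -/
def itComm {R : Type*} [Ring R] (s : ℕ → R) : ℕ → R
  | 0 => s 0
  | n + 1 => itComm s n * s (n + 1) - s (n + 1) * itComm s n

/-- `S` is Lie nilpotent of class ≤ m : every left-normed commutator of `m + 1`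
elements of `S` vanishes. -/
def LieNilpotentClassLe {R : Type*} [Ring R] (S : Set R) (m : ℕ) : Prop :=
  ∀ s : ℕ → R, (∀ n, s n ∈ S) → itComm s m = 0

/-- The Lie derived series of an additive subgroup `S` of a ring:
`D 0 = S`, `D (k+1)` = additive span of `[D k, D k]`. -/
def derSeries {R : Type*} [Ring R] (S : AddSubgroup R) : ℕ → AddSubgroup R
  | 0 => S
  | n + 1 => AddSubgroup.closure
      {x | ∃ a ∈ derSeries S n, ∃ b ∈ derSeries S n, x = a * b - b * a}

/-- `R^(−)_n`: the additive subgroup generated by all left-normed commutators of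
`n` elements of `R`. -/
def lcs (R : Type*) [Ring R] (n : ℕ) : AddSubgroup R :=
  AddSubgroup.closure {x | ∃ s : ℕ → R, x = itComm s (n - 1)}

/-- `R_n = R^(−)_n + R^(−)_n · R`, a two-sided ideal of `R`. -/
def Rn (R : Type*) [Ring R] (n : ℕ) : AddSubgroup R :=
  lcs R n ⊔ AddSubgroup.closure {x | ∃ c ∈ lcs R n, ∃ r : R, x = c * r}

/-- The additive span of `k`-fold products of elements of `S`. -/
def spanPow {R : Type*} [Ring R] (S : Set R) (k : ℕ) : AddSubgroup R :=
  AddSubgroup.closure {x | ∃ l : List R, l.length = k ∧ (∀ a ∈ l, a ∈ S) ∧ x = l.prod}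

/-- `J` is nilpotent: all `k`-fold products of its elements vanish for some `k > 0`. -/
def IsNilpotentSG {R : Type*} [Ring R] (J : AddSubgroup R) : Prop :=
  ∃ k : ℕ, 0 < k ∧ ∀ l : List R, l.length = k → (∀ a ∈ l, a ∈ J) → l.prod = 0

/-- `R` is semiprime: it has no nonzero nilpotent two-sided ideals. -/
def IsSemiprimeRing (R : Type*) [Ring R] : Prop :=
  ∀ J : AddSubgroup R, IsIdealSG J → IsNilpotentSG J → J = ⊥
namespace PRLNIaux

open AddSubgroup

variable {R : Type*} [Ring R]

lemma span_apply (hR : AddSubgroup.closure {x : R | ∃ a b : R, x = a * b - b * a} = ⊤)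
    (S : AddSubgroup R) (φ : R →+ R) (h : ∀ x y : R, φ (x * y - y * x) ∈ S) (z : R) :
    φ z ∈ S := by
  have : (⊤ : AddSubgroup R) ≤ S.comap φ := by
    rw [← hR]
    refine (closure_le _).2 ?_
    rintro w ⟨x, y, rfl⟩
    exact h x y
  exact this (AddSubgroup.mem_top z)

lemma itComm_congr (s s' : ℕ → R) : ∀ n, (∀ i ≤ n, s i = s' i) → itComm s n = itComm s' n
  | 0, h => h 0 (le_refl 0)
  | n+1, h => by
    simp only [itComm]
    rw [itComm_congr s s' n (fun i hi => h i (hi.trans n.le_succ)), h (n+1) le_rfl]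

lemma itComm_zero_of_ge (s : ℕ → R) (m : ℕ) (h : itComm s m = 0) :
    ∀ n, m ≤ n → itComm s n = 0 := by
  intro n hn
  induction n, hn using Nat.le_induction with
  | base => exact h
  | succ n hn ih => simp [itComm, ih]

lemma map_itComm {S : Type*} [Ring S] (f : R →+* S) (s : ℕ → R) :
    ∀ n, f (itComm s n) = itComm (fun i => f (s i)) n
  | 0 => rfl
  | n+1 => by
    simp only [itComm, map_sub, map_mul, map_itComm f s n]

lemma itComm_mem (I : AddSubgroup R) (hri : ∀ i ∈ I, ∀ r : R, i * r ∈ I)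
    (s : ℕ → R) (hs : ∀ n, s n ∈ I) : ∀ n, itComm s n ∈ I
  | 0 => hs 0
  | n+1 => by
    simp only [itComm]
    exact sub_mem (hri _ (itComm_mem I hri s hs n) _) (hri _ (hs (n+1)) _)

/-- `gam I n` : span of left-normed commutators of `n+1` elements of `I`. -/
def gam (I : AddSubgroup R) (n : ℕ) : AddSubgroup R :=
  AddSubgroup.closure {x | ∃ s : ℕ → R, (∀ i, s i ∈ I) ∧ x = itComm s n}

lemma mem_gam_zero (I : AddSubgroup R) {i : R} (hi : i ∈ I) : i ∈ gam I 0 :=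
  subset_closure ⟨fun _ => i, fun _ => hi, rfl⟩

lemma brk_base (I : AddSubgroup R) (n : ℕ) :
    ∀ u ∈ gam I n, ∀ i ∈ I, u * i - i * u ∈ gam I (n+1) := by
  intro u hu
  induction hu using closure_induction with
  | mem x hx =>
    intro i hi
    obtain ⟨s, hs, rfl⟩ := hx
    refine subset_closure ⟨fun j => if j = n+1 then i else s j, ?_, ?_⟩
    · intro j
      by_cases h : j = n+1 <;> simp [h, hi, hs j]
    · have hcg : itComm (fun j => if j = n+1 then i else s j) n = itComm s n :=
        itComm_congr _ _ n (fun j hj => by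
          have : j ≠ n+1 := by omega
          simp [this])
      simp only [itComm, hcg]
      simp
  | zero =>
    intro i hi
    simpa using zero_mem (gam I (n+1))
  | add x y hx hy ihx ihy =>
    intro i hi
    have h := add_mem (ihx i hi) (ihy i hi)
    have : (x + y) * i - i * (x + y) = (x * i - i * x) + (y * i - i * y) := by noncomm_ring
    rw [this]; exact h
  | neg x hx ihx =>
    intro i hi
    have h := neg_mem (ihx i hi)
    have : (-x) * i - i * (-x) = -(x * i - i * x) := by noncomm_ring
    rw [this]; exact h

lemma brk (I : AddSubgroup R) :
    ∀ b a, ∀ u ∈ gam I a, ∀ v ∈ gam I b, u * v - v * u ∈ gam I (a + b + 1) := by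
  intro b
  induction b with
  | zero =>
    intro a u hu v hv
    induction hv using closure_induction with
    | mem x hx =>
      obtain ⟨s, hs, rfl⟩ := hx
      exact brk_base I a u hu _ (hs 0)
    | zero => simpa using zero_mem _
    | add x y hx hy ihx ihy =>
      have h := add_mem ihx ihy
      have e : u * (x + y) - (x + y) * u = (u * x - x * u) + (u * y - y * u) := by noncomm_ring
      rw [e]; exact h
    | neg x hx ihx =>
      have h := neg_mem ihx
      have e : u * (-x) - (-x) * u = -(u * x - x * u) := by noncomm_ring
      rw [e]; exact h
  | succ b ih =>
    intro a u hu v hv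
    induction hv using closure_induction with
    | mem x hx =>
      obtain ⟨s, hs, rfl⟩ := hx
      have hc : itComm s b ∈ gam I b := subset_closure ⟨s, hs, rfl⟩
      set c := itComm s b with hcdef
      set i := s (b+1) with hidef
      have hiI : i ∈ I := hs (b+1)
      have t1 : u * c - c * u ∈ gam I (a + b + 1) := ih a u hu c hc
      have t2 : (u * c - c * u) * i - i * (u * c - c * u) ∈ gam I (a + b + 2) :=
        brk_base I (a+b+1) _ t1 i hiI
      have t3 : u * i - i * u ∈ gam I (a + 1) := brk_base I a u hu i hiI
      have t4 : (u * i - i * u) * c - c * (u * i - i * u) ∈ gam I (a + b + 2) := by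
        have h := ih (a+1) (u * i - i * u) t3 c hc
        have e : a + 1 + b + 1 = a + b + 2 := by omega
        rwa [e] at h
      have key : u * (itComm s (b+1)) - (itComm s (b+1)) * u
          = ((u * c - c * u) * i - i * (u * c - c * u))
            - ((u * i - i * u) * c - c * (u * i - i * u)) := by
        simp only [itComm, ← hcdef, ← hidef]
        noncomm_ring
      have e2 : a + (b+1) + 1 = a + b + 2 := by omega
      rw [key, e2]
      exact sub_mem t2 t4
    | zero => simpa using zero_mem _
    | add x y hx hy ihx ihy =>
      have h := add_mem ihx ihy
      have e : u * (x + y) - (x + y) * u = (u * x - x * u) + (u * y - y * u) := by noncomm_ring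
      rw [e]; exact h
    | neg x hx ihx =>
      have h := neg_mem ihx
      have e : u * (-x) - (-x) * u = -(u * x - x * u) := by noncomm_ring
      rw [e]; exact h

end PRLNIaux

namespace PRLNIaux

open AddSubgroup

variable {R : Type*} [Ring R]

/-- The Lie centraliser of `I` inside `I`. -/
def Zp (I : AddSubgroup R) : Set R := {z | z ∈ I ∧ ∀ i ∈ I, z * i = i * z}

lemma Zp_mul {I : AddSubgroup R} (hri : ∀ i ∈ I, ∀ r : R, i * r ∈ I)
    {z w : R} (hz : z ∈ Zp I) (hw : w ∈ Zp I) : z * w ∈ Zp I := by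
  refine ⟨hri z hz.1 w, fun i hi => ?_⟩
  calc z * w * i = z * (w * i) := by rw [mul_assoc]
    _ = z * (i * w) := by rw [hw.2 i hi]
    _ = (z * i) * w := by rw [mul_assoc]
    _ = (i * z) * w := by rw [hz.2 i hi]
    _ = i * (z * w) := by rw [mul_assoc]

/-- Products of `k` elements of the Lie centraliser. -/
def zprod (I : AddSubgroup R) (k : ℕ) : Set R :=
  {x | ∃ l : List R, l.length = k ∧ (∀ a ∈ l, a ∈ Zp I) ∧ x = l.prod}

lemma list_prod_Zp {I : AddSubgroup R} (hri : ∀ i ∈ I, ∀ r : R, i * r ∈ I) :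
    ∀ l : List R, l ≠ [] → (∀ a ∈ l, a ∈ Zp I) → l.prod ∈ Zp I := by
  intro l
  induction l with
  | nil => simp
  | cons a t ih =>
    intro _ h
    by_cases ht : t = []
    · subst ht; simpa using h a (by simp)
    · rw [List.prod_cons]
      exact Zp_mul hri (h a (by simp)) (ih ht (fun b hb => h b (List.mem_cons_of_mem a hb)))

lemma zprod_Zp {I : AddSubgroup R} (hri : ∀ i ∈ I, ∀ r : R, i * r ∈ I)
    {k : ℕ} (hk : 1 ≤ k) {x : R} (hx : x ∈ zprod I k) : x ∈ Zp I := by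
  obtain ⟨l, hl, hmem, rfl⟩ := hx
  refine list_prod_Zp hri l ?_ hmem
  intro h; subst h; simp at hl; omega

lemma zprod_mul {I : AddSubgroup R} {k j : ℕ} {x y : R}
    (hx : x ∈ zprod I k) (hy : y ∈ zprod I j) : x * y ∈ zprod I (k + j) := by
  obtain ⟨l1, h1, m1, rfl⟩ := hx
  obtain ⟨l2, h2, m2, rfl⟩ := hy
  exact ⟨l1 ++ l2, by simp [h1, h2], by
    intro a ha; rcases List.mem_append.1 ha with h | h
    exacts [m1 a h, m2 a h], List.prod_append.symm⟩

lemma zprod_split {I : AddSubgroup R} {p q : ℕ} {x : R} (hx : x ∈ zprod I (p + q)) :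
    ∃ w₁ ∈ zprod I p, ∃ w₂ ∈ zprod I q, x = w₁ * w₂ := by
  obtain ⟨l, hl, hmem, rfl⟩ := hx
  refine ⟨(l.take p).prod, ⟨l.take p, ?_, fun a ha => hmem a (List.take_subset _ _ ha), rfl⟩,
    (l.drop p).prod, ⟨l.drop p, ?_, fun a ha => hmem a (List.drop_subset _ _ ha), rfl⟩, ?_⟩
  · rw [List.length_take]; omega
  · rw [List.length_drop]; omega
  · rw [← List.prod_append, List.take_append_drop]

lemma zp_collect {I : AddSubgroup R} (hri : ∀ i ∈ I, ∀ r : R, i * r ∈ I)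
    {v : R} (hv : v ∈ Zp I) {u : R} (hu : u ∈ I) (x y : R) :
    (u * x) * (v * y) = v * (u * (x * y)) := by
  have h1 : v * (u * x) = (u * x) * v := hv.2 (u * x) (hri u hu x)
  calc (u * x) * (v * y) = ((u * x) * v) * y := by noncomm_ring
    _ = (v * (u * x)) * y := by rw [h1]
    _ = v * (u * (x * y)) := by noncomm_ring

/-- The exact commutator identity for centraliser elements in a right ideal. -/
lemma zp_comm_identity {I : AddSubgroup R} (hri : ∀ i ∈ I, ∀ r : R, i * r ∈ I)
    {u v : R} (hu : u ∈ Zp I) (hv : v ∈ Zp I) (x y : R) :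
    (u * x) * (v * y) - (v * y) * (u * x) = v * (u * (x * y)) - v * (u * (y * x)) := by
  have h1 : (u * x) * (v * y) = v * (u * (x * y)) := zp_collect hri hv hu.1 x y
  have h2 : (v * y) * (u * x) = u * (v * (y * x)) := zp_collect hri hu hv.1 y x
  have h3 : u * (v * (y * x)) = v * (u * (y * x)) := by
    have : u * v = v * u := hu.2 v hv.1
    calc u * (v * (y * x)) = (u * v) * (y * x) := by rw [mul_assoc]
      _ = (v * u) * (y * x) := by rw [this]
      _ = v * (u * (y * x)) := by rw [mul_assoc]
  rw [h1, h2, h3]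

/-- elements of `G` all whose right multiples stay in `G`. -/
def rmulSG (G : AddSubgroup R) : AddSubgroup R where
  carrier := {x | x ∈ G ∧ ∀ r : R, x * r ∈ G}
  add_mem' := fun h h' => ⟨add_mem h.1 h'.1,
    fun r => by rw [add_mul]; exact add_mem (h.2 r) (h'.2 r)⟩
  zero_mem' := ⟨zero_mem _, fun r => by rw [zero_mul]; exact zero_mem _⟩
  neg_mem' := fun h => ⟨neg_mem h.1, fun r => by rw [neg_mul]; exact neg_mem (h.2 r)⟩

lemma claimA (hR : AddSubgroup.closure {x : R | ∃ a b : R, x = a * b - b * a} = ⊤)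
    {I : AddSubgroup R} (hri : ∀ i ∈ I, ∀ r : R, i * r ∈ I) :
    ∀ j : ℕ, ∀ x ∈ AddSubgroup.closure (zprod I (2^j)),
      x ∈ gam I (2^j - 1) ∧ ∀ r : R, x * r ∈ gam I (2^j - 1) := by
  intro j
  induction j with
  | zero =>
    intro x hx
    have : AddSubgroup.closure (zprod I (2^0)) ≤ rmulSG (gam I (2^0 - 1)) := by
      refine (closure_le _).2 ?_
      rintro w ⟨l, hl, hmem, rfl⟩
      simp only [pow_zero] at hl
      obtain ⟨a, rfl⟩ := List.length_eq_one_iff.1 hl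
      have ha : a ∈ Zp I := hmem a (by simp)
      simp only [List.prod_cons, List.prod_nil, mul_one]
      exact ⟨mem_gam_zero I ha.1, fun r => mem_gam_zero I (hri a ha.1 r)⟩
    exact this hx
  | succ j ih =>
    intro x hx
    have h1 : (1:ℕ) ≤ 2^j := Nat.one_le_two_pow
    have : AddSubgroup.closure (zprod I (2^(j+1))) ≤ rmulSG (gam I (2^(j+1) - 1)) := by
      refine (closure_le _).2 ?_
      rintro w hw
      have hsplit : w ∈ zprod I (2^j + 2^j) := by
        rwa [show 2^j + 2^j = 2^(j+1) from by rw [pow_succ]; omega]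
      obtain ⟨u, hu, v, hv, rfl⟩ := zprod_split hsplit
      have huZ : u ∈ Zp I := zprod_Zp hri h1 hu
      have hvZ : v ∈ Zp I := zprod_Zp hri h1 hv
      have hu' := ih u (subset_closure hu)
      have hv' := ih v (subset_closure hv)
      set c := 2^j - 1 with hc
      have hidx : c + c + 1 = 2^(j+1) - 1 := by
        rw [hc, pow_succ]; omega
      have key : ∀ z : R, v * (u * z) ∈ gam I (2^(j+1) - 1) := by
        intro z
        have φh : ∀ x' y' : R,
            ((AddMonoidHom.mulLeft v).comp (AddMonoidHom.mulLeft u)) (x' * y' - y' * x')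
              ∈ gam I (2^(j+1) - 1) := by
          intro x' y'
          have e : ((AddMonoidHom.mulLeft v).comp (AddMonoidHom.mulLeft u)) (x' * y' - y' * x')
              = (u * x') * (v * y') - (v * y') * (u * x') := by
            simp only [AddMonoidHom.coe_comp, Function.comp_apply, AddMonoidHom.coe_mulLeft]
            rw [zp_comm_identity hri huZ hvZ x' y']
            rw [mul_sub, mul_sub]
          rw [e, ← hidx]
          exact brk I c c _ (hu'.2 x') _ (hv'.2 y')
        exact span_apply hR _ _ φh z
      have huv : u * v = v * u := huZ.2 v hvZ.1
      constructor
      · have := key 1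
        rw [mul_one] at this
        rw [huv]; exact this
      · intro r
        have := key r
        rw [huv, mul_assoc]; exact this
    exact this hx

lemma gam_eq_bot {I : AddSubgroup R} {m : ℕ}
    (hcl : ∀ s : ℕ → R, (∀ n, s n ∈ I) → itComm s m = 0)
    {n : ℕ} (hn : m ≤ n) : gam I n = ⊥ := by
  refine le_bot_iff.1 ?_
  refine (closure_le _).2 ?_
  rintro w ⟨s, hs, rfl⟩
  simp only [SetLike.mem_coe, AddSubgroup.mem_bot]
  exact itComm_zero_of_ge s m (hcl s hs) n hn

end PRLNIaux

namespace PRLNIaux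

open AddSubgroup

variable {R : Type*} [Ring R]

theorem comm_zero (hR : AddSubgroup.closure {x : R | ∃ a b : R, x = a * b - b * a} = ⊤)
    (I : AddSubgroup R) (hri : ∀ i ∈ I, ∀ r : R, i * r ∈ I)
    (hcomm : ∀ a ∈ I, ∀ b ∈ I, a * b = b * a) :
    ∀ a ∈ I, ∀ b ∈ I, a * b = 0 ∧ ∀ x : R, a * (x * b) = 0 := by
  have ha : ∀ a ∈ I, ∀ x : R, a * (a * x) = a * (x * a) := by
    intro a haI x
    have h := hcomm a haI (a * x) (hri a haI x)
    rw [h, mul_assoc]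
  have h2 : ∀ a ∈ I, ∀ s t : R, a * (s * (a * t)) = a * (s * (t * a)) := by
    intro a haI s t
    have e1 := ha a haI (s * t)
    have e2 := ha a haI s
    have key : a * (s * (a * t)) - a * (s * (t * a))
        = (a * (a * (s * t)) - a * ((s * t) * a)) - ((a * (a * s) - a * (s * a)) * t) := by
      noncomm_ring
    have h0 : a * (s * (a * t)) - a * (s * (t * a)) = 0 := by
      rw [key, e1, e2]; simp
    exact sub_eq_zero.1 h0
  have hsq0 : ∀ a ∈ I, ∀ x y : R, a * (a * (x * y - y * x)) = 0 := by
    intro a haI x y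
    have hb : (a * x) * (a * y) = (a * y) * (a * x) :=
      hcomm _ (hri a haI x) _ (hri a haI y)
    have e1 : a * (a * (x * y)) = (a * x) * (a * y) := by
      calc a * (a * (x * y)) = a * ((x * y) * a) := ha a haI (x * y)
        _ = a * (x * (y * a)) := by noncomm_ring
        _ = a * (x * (a * y)) := (h2 a haI x y).symm
        _ = (a * x) * (a * y) := by noncomm_ring
    have e2 : a * (a * (y * x)) = (a * y) * (a * x) := by
      calc a * (a * (y * x)) = a * ((y * x) * a) := ha a haI (y * x)
        _ = a * (y * (x * a)) := by noncomm_ring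
        _ = a * (y * (a * x)) := (h2 a haI y x).symm
        _ = (a * y) * (a * x) := by noncomm_ring
    rw [mul_sub a (x * y) (y * x), mul_sub, e1, e2, hb]
    exact sub_self _
  have hsq : ∀ a ∈ I, ∀ z : R, a * (a * z) = 0 := by
    intro a haI z
    have h := span_apply hR ⊥ ((AddMonoidHom.mulLeft a).comp (AddMonoidHom.mulLeft a))
      (fun x y => by
        simp only [AddMonoidHom.coe_comp, Function.comp_apply, AddMonoidHom.coe_mulLeft]
        rw [hsq0 a haI x y]; exact zero_mem ⊥) z
    simpa using h
  have haxa : ∀ a ∈ I, ∀ x : R, a * (x * a) = 0 := fun a haI x => by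
    rw [← ha a haI x]; exact hsq a haI x
  have hpol : ∀ a ∈ I, ∀ b ∈ I, ∀ x : R, a * (x * b) + b * (x * a) = 0 := by
    intro a haI b hbI x
    have h := haxa (a + b) (add_mem haI hbI) x
    have e : (a + b) * (x * (a + b))
        = a * (x * a) + (a * (x * b) + b * (x * a)) + b * (x * b) := by noncomm_ring
    rw [e, haxa a haI x, haxa b hbI x] at h
    simpa using h
  have hv : ∀ a ∈ I, ∀ b ∈ I, ∀ x y : R, b * (y * (a * x)) + b * (x * (a * y)) = 0 := by
    intro a haI b hbI x y
    have hb : (a * x) * (b * y) = (b * y) * (a * x) :=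
      hcomm _ (hri a haI x) _ (hri b hbI y)
    have hp := congrArg (· * y) (hpol a haI b hbI x)
    simp only [add_mul, zero_mul] at hp
    -- hp : a * (x * b) * y + b * (x * a) * y = 0
    have e1 : b * (y * (a * x)) = (b * y) * (a * x) := by noncomm_ring
    have e2 : (a * x) * (b * y) = a * (x * b) * y := by noncomm_ring
    have e3 : b * (x * (a * y)) = b * (x * a) * y := by noncomm_ring
    rw [e1, ← hb, e2, e3]
    exact hp
  have hcol : ∀ a ∈ I, ∀ b ∈ I, ∀ y : R, b * (y * a) = -(b * (a * y)) := by
    intro a haI b hbI y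
    have h := hv a haI b hbI 1 y
    simp only [mul_one, one_mul] at h
    exact eq_neg_of_add_eq_zero_left h
  have hfin : ∀ a ∈ I, ∀ b ∈ I, ∀ x y : R, b * (a * (x * y)) = -(b * (a * (y * x))) := by
    intro a haI b hbI x y
    -- Route 1 : a * (x * (b * y)) = b * (a * (x * y))
    have r1 : a * (x * (b * y)) = b * (a * (x * y)) := by
      have hp : a * (x * b) = -(b * (x * a)) :=
        eq_neg_of_add_eq_zero_left (hpol a haI b hbI x)
      have hc : b * (x * a) = -(b * (a * x)) := hcol a haI b hbI x
      calc a * (x * (b * y)) = (a * (x * b)) * y := by noncomm_ring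
        _ = (-(b * (x * a))) * y := by rw [hp]
        _ = (-(-(b * (a * x)))) * y := by rw [hc]
        _ = b * (a * (x * y)) := by noncomm_ring
    -- Route 2 : a * (x * (b * y)) = -(b * (a * (y * x)))
    have r2 : a * (x * (b * y)) = -(b * (a * (y * x))) := by
      have hb : (a * x) * (b * y) = (b * y) * (a * x) :=
        hcomm _ (hri a haI x) _ (hri b hbI y)
      have hc : b * (y * a) = -(b * (a * y)) := hcol a haI b hbI y
      calc a * (x * (b * y)) = (a * x) * (b * y) := by noncomm_ring
        _ = (b * y) * (a * x) := hb
        _ = (b * (y * a)) * x := by noncomm_ring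
        _ = (-(b * (a * y))) * x := by rw [hc]
        _ = -(b * (a * (y * x))) := by noncomm_ring
    rw [← r1, r2]
  have h2tor : ∀ a ∈ I, ∀ b ∈ I, ∀ z : R, b * (a * z) + b * (a * z) = 0 := by
    intro a haI b hbI z
    have h := hfin a haI b hbI z 1
    simp only [mul_one, one_mul] at h
    exact add_eq_zero_iff_eq_neg.2 h
  have hz : ∀ a ∈ I, ∀ b ∈ I, ∀ z : R, b * (a * z) = 0 := by
    intro a haI b hbI z
    have h := span_apply hR ⊥ ((AddMonoidHom.mulLeft b).comp (AddMonoidHom.mulLeft a))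
      (fun x y => by
        simp only [AddMonoidHom.coe_comp, Function.comp_apply, AddMonoidHom.coe_mulLeft]
        have e : b * (a * (x * y - y * x)) = b * (a * (x * y)) - b * (a * (y * x)) := by
          noncomm_ring
        rw [e, hfin a haI b hbI x y]
        have h2 := h2tor a haI b hbI (y * x)
        have e2 : -(b * (a * (y * x))) - b * (a * (y * x))
            = -(b * (a * (y * x)) + b * (a * (y * x))) := by abel
        rw [e2, h2, neg_zero]; exact zero_mem ⊥) z
    simpa using h
  intro a haI b hbI
  constructor
  · have h := hz b hbI a haI 1
    simpa using h
  · intro x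
    have hp : a * (x * b) = -(b * (x * a)) :=
      eq_neg_of_add_eq_zero_left (hpol a haI b hbI x)
    have hc : b * (x * a) = -(b * (a * x)) := hcol a haI b hbI x
    rw [hp, hc, hz a haI b hbI x]
    simp

end PRLNIaux

namespace PRLNIaux

open AddSubgroup

variable {R : Type*} [Ring R]

theorem comm_ideal (hR : AddSubgroup.closure {x : R | ∃ a b : R, x = a * b - b * a} = ⊤)
    (I : AddSubgroup R) (hri : ∀ i ∈ I, ∀ r : R, i * r ∈ I)
    (hcomm : ∀ a ∈ I, ∀ b ∈ I, a * b = b * a) :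
    ∃ J : AddSubgroup R, IsIdealSG J ∧ IsNilpotentSG J ∧ I ≤ J := by
  classical
  set T : Set R := {x | ∃ r : R, ∃ i ∈ I, x = r * i} with hT
  set J : AddSubgroup R := AddSubgroup.closure (↑I ∪ T) with hJ
  have core := comm_zero hR I hri hcomm
  have hIJ : I ≤ J := fun i hi => subset_closure (Or.inl hi)
  have hgen : ∀ p ∈ (↑I ∪ T), ∀ q ∈ (↑I ∪ T), p * q = 0 := by
    rintro p (hp | ⟨r, i, hi, rfl⟩) q (hq | ⟨s, j, hj, rfl⟩)
    · exact (core p hp q hq).1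
    · exact (core p hp j hj).2 s
    · rw [mul_assoc, (core i hi q hq).1, mul_zero]
    · rw [mul_assoc, (core i hi j hj).2 s, mul_zero]
  have hmul : ∀ p ∈ J, ∀ q ∈ J, p * q = 0 := by
    have h1 : ∀ p ∈ (↑I ∪ T), ∀ q ∈ J, p * q = 0 := by
      intro p hp q hq
      induction hq using closure_induction with
      | mem x hx => exact hgen p hp x hx
      | zero => exact mul_zero p
      | add x y hx hy ihx ihy => rw [mul_add, ihx, ihy, add_zero]
      | neg x hx ihx => rw [mul_neg, ihx, neg_zero]
    intro p hp
    induction hp using closure_induction with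
    | mem x hx => exact h1 x hx
    | zero => intro q hq; exact zero_mul q
    | add x y hx hy ihx ihy => intro q hq; rw [add_mul, ihx q hq, ihy q hq, add_zero]
    | neg x hx ihx => intro q hq; rw [neg_mul, ihx q hq, neg_zero]
  refine ⟨J, ⟨?_, ?_⟩, ⟨2, by norm_num, ?_⟩, hIJ⟩
  · -- left ideal
    intro j hj r
    induction hj using closure_induction with
    | mem x hx =>
      rcases hx with hx | ⟨s, i, hi, rfl⟩
      · exact subset_closure (Or.inr ⟨r, x, hx, rfl⟩)
      · rw [← mul_assoc]
        exact subset_closure (Or.inr ⟨r * s, i, hi, rfl⟩)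
    | zero => rw [mul_zero]; exact zero_mem J
    | add x y hx hy ihx ihy => rw [mul_add]; exact add_mem ihx ihy
    | neg x hx ihx => rw [mul_neg]; exact neg_mem ihx
  · -- right ideal
    intro j hj r
    induction hj using closure_induction with
    | mem x hx =>
      rcases hx with hx | ⟨s, i, hi, rfl⟩
      · exact hIJ (hri x hx r)
      · rw [mul_assoc]
        exact subset_closure (Or.inr ⟨s, i * r, hri i hi r, rfl⟩)
    | zero => rw [zero_mul]; exact zero_mem J
    | add x y hx hy ihx ihy => rw [add_mul]; exact add_mem ihx ihy
    | neg x hx ihx => rw [neg_mul]; exact neg_mem ihx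
  · -- products of length 2 vanish
    intro l hl hmem
    obtain ⟨p, q, rfl⟩ := List.length_eq_two.1 hl
    simp only [List.prod_cons, List.prod_nil, mul_one]
    exact hmul p (hmem p (by simp)) q (hmem q (by simp))

lemma isIdeal_bot : IsIdealSG (⊥ : AddSubgroup R) := by
  constructor <;> intro i hi r <;> rw [AddSubgroup.mem_bot] at * <;> simp [hi]

lemma isNilpotent_bot : IsNilpotentSG (⊥ : AddSubgroup R) := by
  refine ⟨1, by norm_num, fun l hl hmem => ?_⟩
  obtain ⟨a, rfl⟩ := List.length_eq_one_iff.1 hl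
  have : a = 0 := by simpa using hmem a (by simp)
  simp [this]

end PRLNIaux

namespace PRLNIaux

open AddSubgroup

variable {R : Type*} [Ring R]

/-- The ring congruence associated to a two-sided ideal given as an `AddSubgroup`. -/
def idealCon (N : AddSubgroup R) (hN : IsIdealSG N) : RingCon R where
  r a b := a - b ∈ N
  iseqv := by
    refine ⟨fun a => by simpa using zero_mem N, fun {a b} h => ?_, fun {a b c} h1 h2 => ?_⟩
    · have := neg_mem h
      simpa using this
    · have h3 := add_mem h1 h2
      have e : a - b + (b - c) = a - c := by abel
      rwa [e] at h3
  mul' := by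
    intro a b c d h1 h2
    have e : a * c - b * d = a * (c - d) + (a - b) * d := by noncomm_ring
    show a * c - b * d ∈ N
    rw [e]
    exact add_mem (hN.1 _ h2 a) (hN.2 _ h1 d)
  add' := by
    intro a b c d h1 h2
    show a + c - (b + d) ∈ N
    have h3 := add_mem h1 h2
    have e : a - b + (c - d) = a + c - (b + d) := by abel
    rwa [e] at h3

lemma con_mk'_surjective (c : RingCon R) : Function.Surjective c.mk' :=
  fun q => Quotient.inductionOn' q (fun x => ⟨x, rfl⟩)

lemma idealCon_ker (N : AddSubgroup R) (hN : IsIdealSG N) (x : R) :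
    (idealCon N hN).mk' x = 0 ↔ x ∈ N := by
  have h0 : (0 : (idealCon N hN).Quotient) = (idealCon N hN).mk' 0 := rfl
  rw [h0]
  constructor
  · intro h
    have h2 : x - 0 ∈ N := (RingCon.eq (idealCon N hN)).1 h
    simpa using h2
  · intro h
    refine (RingCon.eq (idealCon N hN)).2 ?_
    show x - 0 ∈ N
    simpa using h

/-- The quotient of a perfect ring is perfect. -/
lemma perfect_quot {S : Type*} [Ring S] (f : R →+* S) (hf : Function.Surjective f)
    (hR : AddSubgroup.closure {x : R | ∃ a b : R, x = a * b - b * a} = ⊤) :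
    AddSubgroup.closure {x : S | ∃ a b : S, x = a * b - b * a} = ⊤ := by
  have key : ∀ x : R, f x ∈ AddSubgroup.closure {x : S | ∃ a b : S, x = a * b - b * a} := by
    intro x
    have hx : x ∈ AddSubgroup.closure {x : R | ∃ a b : R, x = a * b - b * a} := by
      rw [hR]; exact AddSubgroup.mem_top x
    induction hx using closure_induction with
    | mem w hw =>
      obtain ⟨a, b, rfl⟩ := hw
      exact subset_closure ⟨f a, f b, by simp⟩
    | zero => simpa using zero_mem _
    | add x y hx hy ihx ihy => rw [map_add]; exact add_mem ihx ihy
    | neg x hx ihx => rw [map_neg]; exact neg_mem ihx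
  rw [eq_top_iff]
  intro q _
  obtain ⟨x, rfl⟩ := hf q
  exact key x

lemma map_right_ideal {S : Type*} [Ring S] (f : R →+* S) (hf : Function.Surjective f)
    (I : AddSubgroup R) (hri : ∀ i ∈ I, ∀ r : R, i * r ∈ I) :
    ∀ i' ∈ I.map f.toAddMonoidHom, ∀ r' : S, i' * r' ∈ I.map f.toAddMonoidHom := by
  rintro i' hi' r'
  obtain ⟨i, hi, rfl⟩ := hi'
  obtain ⟨r, rfl⟩ := hf r'
  exact ⟨i * r, hri i hi r, by simp⟩

lemma comap_ideal {S : Type*} [Ring S] (f : R →+* S) (J : AddSubgroup S)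
    (hJ : IsIdealSG J) : IsIdealSG (J.comap f.toAddMonoidHom) := by
  constructor
  · intro i hi r
    simp only [AddSubgroup.mem_comap, RingHom.toAddMonoidHom_eq_coe,
      AddMonoidHom.coe_coe] at *
    rw [map_mul]
    exact hJ.1 _ hi (f r)
  · intro i hi r
    simp only [AddSubgroup.mem_comap, RingHom.toAddMonoidHom_eq_coe,
      AddMonoidHom.coe_coe] at *
    rw [map_mul]
    exact hJ.2 _ hi (f r)

lemma prod_chunks (J N : AddSubgroup R) (k : ℕ)
    (hJN : ∀ l : List R, l.length = k → (∀ a ∈ l, a ∈ J) → l.prod ∈ N) :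
    ∀ t : ℕ, ∀ l : List R, l.length = k * t → (∀ a ∈ l, a ∈ J) →
      ∃ ln : List R, ln.length = t ∧ (∀ b ∈ ln, b ∈ N) ∧ ln.prod = l.prod := by
  intro t
  induction t with
  | zero =>
    intro l hl _
    have : l = [] := List.length_eq_zero_iff.mp (by simpa using hl)
    subst this
    exact ⟨[], rfl, by simp, rfl⟩
  | succ t ih =>
    intro l hl hmem
    have hkl : k ≤ l.length := by rw [hl]; nlinarith [Nat.le_refl k]
    have hlen : (l.take k).length = k := by rw [List.length_take]; omega
    have h1 : (l.take k).prod ∈ N :=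
      hJN _ hlen (fun a ha => hmem a (List.take_subset _ _ ha))
    have hdl : (l.drop k).length = k * t := by rw [List.length_drop, hl]; ring_nf; omega
    obtain ⟨ln, h2, h3, h4⟩ := ih (l.drop k) hdl (fun a ha => hmem a (List.drop_subset _ _ ha))
    refine ⟨(l.take k).prod :: ln, by simp [h2], ?_, ?_⟩
    · intro b hb
      rcases List.mem_cons.1 hb with rfl | hb
      · exact h1
      · exact h3 b hb
    · rw [List.prod_cons, h4, ← List.prod_append, List.take_append_drop]

/-- Pull back a nilpotent ideal along a quotient map with nilpotent kernel. -/
lemma nilp_comap {S : Type*} [Ring S] (f : R →+* S) (N : AddSubgroup R)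
    (hker : ∀ x : R, f x = 0 ↔ x ∈ N) (hN : IsNilpotentSG N)
    (J' : AddSubgroup S) (hJ' : IsNilpotentSG J') :
    IsNilpotentSG (J'.comap f.toAddMonoidHom) := by
  obtain ⟨k, hk, hknil⟩ := hJ'
  obtain ⟨t, ht, htnil⟩ := hN
  refine ⟨k * t, by positivity, fun l hl hmem => ?_⟩
  have hblock : ∀ l' : List R, l'.length = k →
      (∀ a ∈ l', a ∈ J'.comap f.toAddMonoidHom) → l'.prod ∈ N := by
    intro l' hl' hmem'
    rw [← hker]
    have : f l'.prod = (l'.map f).prod := map_list_prod f l'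
    rw [this]
    refine hknil (l'.map f) (by simp [hl']) ?_
    intro b hb
    obtain ⟨a, ha, rfl⟩ := List.mem_map.1 hb
    exact hmem' a ha
  obtain ⟨ln, h2, h3, h4⟩ := prod_chunks _ N k hblock t l hl hmem
  rw [← h4]
  exact htnil ln h2 h3

end PRLNIaux

namespace PRLNIaux

open AddSubgroup

universe u

theorem main_right : ∀ (m : ℕ) (R : Type u) [inst : Ring R],
    AddSubgroup.closure {x : R | ∃ a b : R, x = a * b - b * a} = ⊤ →
    ∀ (I : AddSubgroup R), IsRightIdealSG I →
    LieNilpotentClassLe (I : Set R) m →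
    ∃ J : AddSubgroup R, IsIdealSG J ∧ IsNilpotentSG J ∧ I ≤ J := by
  intro m
  induction m with
  | zero =>
    intro R _ hR I hri hcl
    refine ⟨⊥, isIdeal_bot, isNilpotent_bot, ?_⟩
    intro i hi
    have h0 : i = 0 := hcl (fun _ => i) (fun _ => hi)
    simp [h0]
  | succ m ih =>
    intro R _ hR I hri hcl
    classical
    have hri' : ∀ i ∈ I, ∀ r : R, i * r ∈ I := hri
    set K := 2^(m+2) with hK
    have hKge : m + 2 ≤ K := le_of_lt ((Nat.lt_two_pow_self (n := m+2)))
    have hvan : ∀ u ∈ zprod I K, u = 0 ∧ ∀ r : R, u * r = 0 := by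
      intro u hu
      have h := claimA hR hri' (m+2) u (subset_closure hu)
      have hbot : gam I (2^(m+2) - 1) = ⊥ :=
        gam_eq_bot (fun s hs => hcl s hs) (by omega)
      rw [hbot] at h
      exact ⟨by simpa using h.1, fun r => by simpa using h.2 r⟩
    have descent : ∀ d k : ℕ, K ≤ k + d → 1 ≤ k →
        ∃ N : AddSubgroup R, IsIdealSG N ∧ IsNilpotentSG N ∧
          ∀ u ∈ zprod I k, u ∈ N ∧ ∀ r : R, u * r ∈ N := by
      intro d
      induction d with
      | zero =>
        intro k hk hk1
        refine ⟨⊥, isIdeal_bot, isNilpotent_bot, ?_⟩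
        intro u hu
        have hu' : u ∈ zprod I (k - K + K) := by
          rw [show k - K + K = k from by omega]; exact hu
        obtain ⟨w₁, h1, w₂, h2, rfl⟩ := zprod_split hu'
        have hz := hvan w₂ h2
        constructor
        · simp [AddSubgroup.mem_bot, hz.1]
        · intro r; simp [AddSubgroup.mem_bot, hz.1]
      | succ d ihd =>
        intro k hk hk1
        by_cases hd : K ≤ k + d
        · exact ihd k hd hk1
        obtain ⟨N', hN'i, hN'n, hN'mem⟩ := ihd (k+1) (by omega) (by omega)
        set c := idealCon N' hN'i with hc
        set f := c.mk' with hf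
        have hfs : Function.Surjective f := con_mk'_surjective c
        have hker : ∀ x : R, f x = 0 ↔ x ∈ N' := idealCon_ker N' hN'i
        have hQperf := perfect_quot f hfs hR
        set T' : Set c.Quotient := {y | ∃ u ∈ zprod I k, ∃ q : c.Quotient, y = f u * q}
          with hT'
        set P : AddSubgroup c.Quotient := AddSubgroup.closure T' with hP
        have hPri : ∀ p ∈ P, ∀ q : c.Quotient, p * q ∈ P := by
          intro p hp
          induction hp using closure_induction with
          | mem x hx =>
            intro q
            obtain ⟨u, hu, q', rfl⟩ := hx
            rw [mul_assoc]; exact subset_closure ⟨u, hu, q' * q, rfl⟩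
          | zero => intro q; rw [zero_mul]; exact zero_mem P
          | add x y hx hy ihx ihy =>
            intro q; rw [add_mul]; exact add_mem (ihx q) (ihy q)
          | neg x hx ihx => intro q; rw [neg_mul]; exact neg_mem (ihx q)
        have hcomm0 : ∀ u ∈ zprod I k, ∀ u' ∈ zprod I k, ∀ x y : R,
            (u * x) * (u' * y) - (u' * y) * (u * x) ∈ N' := by
          intro u hu u' hu' x y
          have huZ : u ∈ Zp I := zprod_Zp hri' hk1 hu
          have hu'Z : u' ∈ Zp I := zprod_Zp hri' hk1 hu'
          rw [zp_comm_identity hri' huZ hu'Z x y]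
          have key : ∀ w : R, u' * (u * w) ∈ N' := by
            intro w
            have h2k : u' * u ∈ zprod I (k + k) := zprod_mul hu' hu
            have h2k' : u' * u ∈ zprod I ((k+1) + (k-1)) := by
              rw [show (k+1) + (k-1) = k + k from by omega]; exact h2k
            obtain ⟨w₁, hw1, w₂, hw2, he⟩ := zprod_split h2k'
            have e : u' * (u * w) = w₁ * (w₂ * w) := by
              rw [← mul_assoc, he, mul_assoc]
            rw [e]
            exact (hN'mem w₁ hw1).2 (w₂ * w)
          exact sub_mem (key (x*y)) (key (y*x))
        have hPcomm : ∀ p ∈ P, ∀ p' ∈ P, p * p' = p' * p := by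
          have h1 : ∀ g ∈ T', ∀ p' ∈ P, g * p' = p' * g := by
            intro g hg p' hp'
            induction hp' using closure_induction with
            | mem x hx =>
              obtain ⟨u, hu, q, rfl⟩ := hg
              obtain ⟨u', hu', q', rfl⟩ := hx
              obtain ⟨xx, rfl⟩ := hfs q
              obtain ⟨yy, rfl⟩ := hfs q'
              have e1 : (f u * f xx) * (f u' * f yy) - (f u' * f yy) * (f u * f xx)
                  = f ((u * xx) * (u' * yy) - (u' * yy) * (u * xx)) := by
                simp [map_mul, map_sub]
              have h0 : f ((u * xx) * (u' * yy) - (u' * yy) * (u * xx)) = 0 :=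
                (hker _).2 (hcomm0 u hu u' hu' xx yy)
              have heq : (f u * f xx) * (f u' * f yy) - (f u' * f yy) * (f u * f xx) = 0 := by
                rw [e1, h0]
              exact sub_eq_zero.1 heq
            | zero => simp
            | add x y hx hy ihx ihy => rw [mul_add, add_mul, ihx, ihy]
            | neg x hx ihx => rw [mul_neg, neg_mul, ihx]
          intro p hp
          induction hp using closure_induction with
          | mem g hg => intro p' hp'; exact h1 g hg p' hp'
          | zero => intro p' hp'; simp
          | add x y hx hy ihx ihy =>
            intro p' hp'; rw [add_mul, mul_add, ihx p' hp', ihy p' hp']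
          | neg x hx ihx => intro p' hp'; rw [neg_mul, mul_neg, ihx p' hp']
        obtain ⟨J', hJ'i, hJ'n, hPJ'⟩ := comm_ideal hQperf P hPri hPcomm
        refine ⟨J'.comap f.toAddMonoidHom, comap_ideal f J' hJ'i,
          nilp_comap f N' hker hN'n J' hJ'n, ?_⟩
        intro u hu
        constructor
        · have : f u ∈ J' := hPJ' (subset_closure ⟨u, hu, 1, (mul_one _).symm⟩)
          simpa [AddSubgroup.mem_comap] using this
        · intro r
          have : f (u * r) ∈ J' := by
            refine hPJ' (subset_closure ⟨u, hu, f r, ?_⟩)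
            rw [map_mul]
          simpa [AddSubgroup.mem_comap] using this
    obtain ⟨N1, hN1i, hN1n, hN1mem⟩ := descent K 1 (by omega) le_rfl
    set c := idealCon N1 hN1i with hc
    set f := c.mk' with hf
    have hfs : Function.Surjective f := con_mk'_surjective c
    have hker : ∀ x : R, f x = 0 ↔ x ∈ N1 := idealCon_ker N1 hN1i
    have hQperf := perfect_quot f hfs hR
    set I' := I.map f.toAddMonoidHom with hI'
    have hI'ri : IsRightIdealSG I' := map_right_ideal f hfs I hri'
    have hI'cl : LieNilpotentClassLe (I' : Set c.Quotient) m := by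
      intro s' hs'
      have hmm : ∀ n, ∃ x ∈ I, f.toAddMonoidHom x = s' n :=
        fun n => AddSubgroup.mem_map.1 (hs' n)
      choose t htI htf using hmm
      have hZ : itComm t m ∈ Zp I := by
        refine ⟨itComm_mem I hri' t htI m, fun i hi => ?_⟩
        have hb := brk_base I m (itComm t m) (subset_closure ⟨t, htI, rfl⟩) i hi
        rw [gam_eq_bot (fun s hs => hcl s hs) le_rfl] at hb
        exact sub_eq_zero.1 (AddSubgroup.mem_bot.1 hb)
      have hmem1 : itComm t m ∈ zprod I 1 :=
        ⟨[itComm t m], rfl, by simpa using hZ, by simp⟩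
      have hN : itComm t m ∈ N1 := (hN1mem _ hmem1).1
      have : itComm s' m = f (itComm t m) := by
        rw [map_itComm f t m]
        refine (itComm_congr _ _ m (fun i _ => ?_)).symm
        exact htf i
      rw [this]
      exact (hker _).2 hN
    obtain ⟨J', hJ'i, hJ'n, hI'J'⟩ := ih c.Quotient hQperf I' hI'ri hI'cl
    refine ⟨J'.comap f.toAddMonoidHom, comap_ideal f J' hJ'i,
      nilp_comap f N1 hker hN1n J' hJ'n, ?_⟩
    intro i hi
    have : f i ∈ J' := hI'J' (AddSubgroup.mem_map_of_mem _ hi)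
    simpa [AddSubgroup.mem_comap] using this

end PRLNIaux

namespace PRLNIaux

open AddSubgroup MulOpposite

variable {R : Type*} [Ring R]

lemma itComm_op (s : ℕ → R) : ∀ k,
    itComm (fun n => op (s n)) k = op (itComm s k) ∨
    itComm (fun n => op (s n)) k = - op (itComm s k)
  | 0 => Or.inl rfl
  | k+1 => by
    rcases itComm_op s k with h | h
    · right
      show itComm (fun n => op (s n)) k * op (s (k+1))
          - op (s (k+1)) * itComm (fun n => op (s n)) k
          = - op (itComm s k * s (k+1) - s (k+1) * itComm s k)
      rw [h, ← op_mul, ← op_mul, ← op_sub, ← op_neg, neg_sub]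
    · left
      show itComm (fun n => op (s n)) k * op (s (k+1))
          - op (s (k+1)) * itComm (fun n => op (s n)) k
          = op (itComm s k * s (k+1) - s (k+1) * itComm s k)
      rw [h]
      rw [neg_mul, mul_neg, ← op_mul, ← op_mul, sub_neg_eq_add, neg_add_eq_sub, ← op_sub]

end PRLNIaux

theorem perfect_ring_lie_nilpotent_ideal' {R : Type*} [Ring R]
    (hR : AddSubgroup.closure {x : R | ∃ a b : R, x = a * b - b * a} = ⊤)
    (I : AddSubgroup R) (hI : IsLeftIdealSG I ∨ IsRightIdealSG I)
    (hnil : ∃ m, LieNilpotentClassLe (I : Set R) m) :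
    ∃ J : AddSubgroup R, IsIdealSG J ∧ IsNilpotentSG J ∧ I ≤ J := by
  classical
  obtain ⟨m, hm⟩ := hnil
  rcases hI with hleft | hright
  · -- left ideal: pass to the opposite ring
    open MulOpposite AddSubgroup in
    set e : R ≃+ Rᵐᵒᵖ := MulOpposite.opAddEquiv with he
    have heapp : ∀ x : R, e.toAddMonoidHom x = op x := fun x => rfl
    have heapp' : ∀ x : R, e x = op x := fun x => rfl
    have hR' : AddSubgroup.closure {x : Rᵐᵒᵖ | ∃ a b : Rᵐᵒᵖ, x = a * b - b * a} = ⊤ := by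
      have key : ∀ x : R, x ∈ AddSubgroup.closure {x : R | ∃ a b : R, x = a * b - b * a} →
          op x ∈ AddSubgroup.closure {x : Rᵐᵒᵖ | ∃ a b : Rᵐᵒᵖ, x = a * b - b * a} := by
        intro x hx
        induction hx using AddSubgroup.closure_induction with
        | mem w hw =>
          obtain ⟨a, b, rfl⟩ := hw
          refine AddSubgroup.subset_closure ⟨op b, op a, ?_⟩
          rw [← op_mul, ← op_mul, ← op_sub]
        | zero => simpa using zero_mem _
        | add x y hx hy ihx ihy => rw [op_add]; exact add_mem ihx ihy
        | neg x hx ihx => rw [op_neg]; exact neg_mem ihx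
      rw [eq_top_iff]
      intro q _
      have h := key (unop q) (by rw [hR]; trivial)
      simpa using h
    set I' : AddSubgroup Rᵐᵒᵖ := I.map e.toAddMonoidHom with hI'd
    have hI'ri : IsRightIdealSG I' := by
      rintro i' hi' r'
      obtain ⟨i, hi, rfl⟩ := hi'
      refine ⟨unop r' * i, hleft i hi _, ?_⟩
      rw [heapp, heapp, op_mul]
      simp
    have hI'cl : LieNilpotentClassLe (I' : Set Rᵐᵒᵖ) m := by
      intro s' hs'
      set t : ℕ → R := fun n => unop (s' n) with htd
      have htI : ∀ n, t n ∈ I := by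
        intro n
        obtain ⟨i, hi, hie⟩ := hs' n
        rw [htd]
        simp only []
        rw [← hie, heapp]
        simpa using hi
      have hst : (fun n => op (t n)) = s' := by funext n; simp [htd]
      have h0 : itComm t m = 0 := hm t htI
      rcases PRLNIaux.itComm_op t m with h | h <;>
        rw [← hst] <;> rw [h, h0] <;> simp
    obtain ⟨J', hJ'i, hJ'n, hI'J'⟩ := PRLNIaux.main_right m Rᵐᵒᵖ hR' I' hI'ri hI'cl
    refine ⟨J'.comap e.toAddMonoidHom, ⟨?_, ?_⟩, ?_, ?_⟩
    · -- left ideal property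
      intro j hj r
      have hj' : op j ∈ J' := by simpa [AddSubgroup.mem_comap, heapp, heapp'] using hj
      have : op (r * j) ∈ J' := by
        have h2 := hJ'i.2 (op j) hj' (op r)
        rw [← op_mul] at h2
        exact h2
      simpa [AddSubgroup.mem_comap, heapp, heapp'] using this
    · -- right ideal property
      intro j hj r
      have hj' : op j ∈ J' := by simpa [AddSubgroup.mem_comap, heapp, heapp'] using hj
      have : op (j * r) ∈ J' := by
        have := hJ'i.1 (op j) hj' (op r)
        rw [← op_mul] at this
        exact this
      simpa [AddSubgroup.mem_comap, heapp, heapp'] using this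
    · -- nilpotency
      obtain ⟨k, hk, hknil⟩ := hJ'n
      refine ⟨k, hk, fun l hl hmem => ?_⟩
      have hop : op l.prod = ((l.map op).reverse).prod := MulOpposite.op_list_prod l
      have h0 : ((l.map op).reverse).prod = 0 := by
        refine hknil _ (by simp [hl]) ?_
        intro b hb
        rw [List.mem_reverse] at hb
        obtain ⟨a, ha, rfl⟩ := List.mem_map.1 hb
        have := hmem a ha
        simpa [AddSubgroup.mem_comap, heapp, heapp'] using this
      rw [h0] at hop
      exact MulOpposite.op_eq_zero_iff _ |>.1 hop
    · intro i hi
      have : op i ∈ J' := hI'J' (AddSubgroup.mem_map_of_mem _ hi)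
      simpa [AddSubgroup.mem_comap, heapp, heapp'] using this
  · exact PRLNIaux.main_right m R hR I hright hm

/-- **Corollary of Theorem 2.** If `R = [R,R]` and `I` is a Lie nilpotent
one-sided ideal of `R`, then `I` is contained in a nilpotent two-sided ideal of `R`. -/
theorem perfect_ring_lie_nilpotent_ideal {R : Type*} [Ring R]
    (hR : AddSubgroup.closure {x : R | ∃ a b : R, x = a * b - b * a} = ⊤)
    (I : AddSubgroup R) (hI : IsLeftIdealSG I ∨ IsRightIdealSG I)
    (hnil : ∃ m, LieNilpotentClassLe (I : Set R) m) :
    ∃ J : AddSubgroup R, IsIdealSG J ∧ IsNilpotentSG J ∧ I ≤ J :=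
  perfect_ring_lie_nilpotent_ideal' hR I hI hnil
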